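/- arXiv:1802.01256 — 2 statements merged into one kernel-verified Lean document; each statement's English description precedes it below -/
import Mathlib

section
/- (Backtracking accepts unit step size.) Let m ≥ 1, let b ∈ ℝ^m have nonnegative entries, let u ∈ ℂ^m, and let ũ be the phase-matched synthesis of u with magnitudes b. Then f(ũ) = 0, and for every β with 0 < β ≤ 1/2, the Armijo backtracking criterion with step size λ = 1 and descent direction g = u − ũ is satisfied: f(u − g) ≤ f(u) − β ‖g‖², where ‖g‖² = Σ_{l=0}^{m−1} |u_l − ũ_l|². -/
/-- The `m`-point discrete Fourier transform of `w` (entries indexed `0, …, m-1`):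
`(F w)_i = ∑_{l=0}^{m-1} w_l · exp(-2πι i l / m)`. -/
noncomputable def dft (m : ℕ) (w : ℕ → ℂ) (i : ℕ) : ℂ :=
  ∑ l ∈ Finset.range m,
    w l * Complex.exp (-((2 : ℂ) * (Real.pi : ℂ) * Complex.I * (i : ℂ) * (l : ℂ)) / (m : ℂ))

/-- The phase function: `sgn(w) = w / |w|` for `w ≠ 0` and `sgn(0) = 1`. -/
noncomputable def csgn (w : ℂ) : ℂ :=
  if w = 0 then 1 else w / (‖w‖ : ℂ)

/-- The phase-matched synthesis of `u ∈ ℂ^m` with target magnitudes `b`: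
`ũ_l = (1/m) ∑_{i=0}^{m-1} exp(2πι i l / m) · b_i · sgn((F u)_i)`. -/
noncomputable def utilde (m : ℕ) (b : ℕ → ℝ) (u : ℕ → ℂ) (l : ℕ) : ℂ :=
  ((m : ℂ))⁻¹ * ∑ i ∈ Finset.range m,
    Complex.exp ((2 : ℂ) * (Real.pi : ℂ) * Complex.I * (i : ℂ) * (l : ℂ) / (m : ℂ)) *
      (b i : ℂ) * csgn (dft m u i)

/-- The amplitude loss `f(u) = (1/(2m)) ∑_{i<m} (|(F u)_i| - b_i)²`. -/
noncomputable def floss (m : ℕ) (b : ℕ → ℝ) (u : ℕ → ℂ) : ℝ :=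
  (1 / (2 * m) : ℝ) * ∑ i ∈ Finset.range m, (‖dft m u i‖ - b i) ^ 2

lemma expSum (m : ℕ) (hm : 1 ≤ m) (k : ℤ) :
    (∑ l ∈ Finset.range m, Complex.exp ((2:ℂ) * Real.pi * Complex.I * (k:ℂ) * (l:ℂ) / m)) =
      if (m:ℤ) ∣ k then (m:ℂ) else 0 := by
  have hm0 : (m:ℂ) ≠ 0 := by
    have : 0 < m := hm; exact_mod_cast this.ne'
  have h2pi : (2:ℂ) * Real.pi * Complex.I ≠ 0 := by
    simp [Real.pi_ne_zero, Complex.I_ne_zero]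
  set ζ : ℂ := Complex.exp ((2:ℂ) * Real.pi * Complex.I * (k:ℂ) / m) with hζ
  have hterm : ∀ l : ℕ, Complex.exp ((2:ℂ) * Real.pi * Complex.I * (k:ℂ) * (l:ℂ) / m) = ζ ^ l := by
    intro l
    rw [hζ, ← Complex.exp_nat_mul]
    congr 1
    ring
  simp only [hterm]
  by_cases hd : (m:ℤ) ∣ k
  · obtain ⟨c, hc⟩ := hd
    have hζ1 : ζ = 1 := by
      rw [hζ, hc]
      push_cast
      rw [show (2:ℂ) * Real.pi * Complex.I * ((m:ℂ) * (c:ℂ)) / m = (c:ℂ) * (2 * Real.pi * Complex.I) by field_simp]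
      exact Complex.exp_int_mul_two_pi_mul_I c
    simp [hζ1, hc]
  · rw [if_neg hd]
    have hζ1 : ζ ≠ 1 := by
      intro h
      rw [hζ, Complex.exp_eq_one_iff] at h
      obtain ⟨n, hn⟩ := h
      apply hd
      refine ⟨n, ?_⟩
      have hc : (k:ℂ) = (m:ℂ) * (n:ℂ) := by
        field_simp at hn
        exact hn
      exact_mod_cast hc
    have hζm : ζ ^ m = 1 := by
      rw [hζ, ← Complex.exp_nat_mul]
      rw [show (m:ℂ) * ((2:ℂ) * Real.pi * Complex.I * (k:ℂ) / m) = (k:ℂ) * (2 * Real.pi * Complex.I) by field_simp]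
      exact Complex.exp_int_mul_two_pi_mul_I k
    rw [geom_sum_eq hζ1, hζm]
    simp

lemma dvd_iff_eq {m : ℕ} {i j : ℕ} (hi : i < m) (hj : j < m) :
    (m:ℤ) ∣ ((j:ℤ) - (i:ℤ)) ↔ i = j := by
  constructor
  · rintro ⟨c, hc⟩
    have h1 : (i:ℤ) < m := by exact_mod_cast hi
    have h2 : (j:ℤ) < m := by exact_mod_cast hj
    have hc0 : c = 0 := by nlinarith [Int.natCast_nonneg i, Int.natCast_nonneg j]
    rw [hc0, mul_zero] at hc
    omega
  · rintro rfl; simp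

lemma ortho (m : ℕ) (hm : 1 ≤ m) {i j : ℕ} (hi : i < m) (hj : j < m) :
    (∑ l ∈ Finset.range m,
      Complex.exp ((2:ℂ) * Real.pi * Complex.I * (j:ℂ) * (l:ℂ) / m) *
        Complex.exp (-((2:ℂ) * Real.pi * Complex.I * (i:ℂ) * (l:ℂ)) / m)) =
      if i = j then (m:ℂ) else 0 := by
  have key : ∀ l : ℕ,
      Complex.exp ((2:ℂ) * Real.pi * Complex.I * (j:ℂ) * (l:ℂ) / m) *
        Complex.exp (-((2:ℂ) * Real.pi * Complex.I * (i:ℂ) * (l:ℂ)) / m) =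
      Complex.exp ((2:ℂ) * Real.pi * Complex.I * (((j:ℤ) - (i:ℤ) : ℤ):ℂ) * (l:ℂ) / m) := by
    intro l
    rw [← Complex.exp_add]
    congr 1
    push_cast
    ring
  simp only [key]
  rw [expSum m hm ((j:ℤ) - (i:ℤ)), if_congr (dvd_iff_eq hi hj) rfl rfl]

lemma dft_utilde (m : ℕ) (hm : 1 ≤ m) (b : ℕ → ℝ) (u : ℕ → ℂ) {i : ℕ} (hi : i < m) :
    dft m (utilde m b u) i = (b i : ℂ) * csgn (dft m u i) := by
  have hm0 : (m:ℂ) ≠ 0 := by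
    have : 0 < m := hm; exact_mod_cast this.ne'
  calc dft m (utilde m b u) i
      = ∑ l ∈ Finset.range m, utilde m b u l *
          Complex.exp (-((2:ℂ) * Real.pi * Complex.I * (i:ℂ) * (l:ℂ)) / m) := rfl
    _ = ∑ l ∈ Finset.range m, ∑ j ∈ Finset.range m, (m:ℂ)⁻¹ *
          (Complex.exp ((2:ℂ) * Real.pi * Complex.I * (j:ℂ) * (l:ℂ) / m) *
            ((b j : ℂ) * csgn (dft m u j)) *
            Complex.exp (-((2:ℂ) * Real.pi * Complex.I * (i:ℂ) * (l:ℂ)) / m)) := by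
        refine Finset.sum_congr rfl fun l _ => ?_
        rw [utilde, Finset.mul_sum, Finset.sum_mul]
        exact Finset.sum_congr rfl fun j _ => by ring
    _ = ∑ j ∈ Finset.range m, ∑ l ∈ Finset.range m, (m:ℂ)⁻¹ *
          (Complex.exp ((2:ℂ) * Real.pi * Complex.I * (j:ℂ) * (l:ℂ) / m) *
            ((b j : ℂ) * csgn (dft m u j)) *
            Complex.exp (-((2:ℂ) * Real.pi * Complex.I * (i:ℂ) * (l:ℂ)) / m)) :=
        Finset.sum_comm
    _ = ∑ j ∈ Finset.range m,
          if i = j then (b j : ℂ) * csgn (dft m u j) else 0 := by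
        refine Finset.sum_congr rfl fun j hj => ?_
        have : (∑ l ∈ Finset.range m, (m:ℂ)⁻¹ *
            (Complex.exp ((2:ℂ) * Real.pi * Complex.I * (j:ℂ) * (l:ℂ) / m) *
              ((b j : ℂ) * csgn (dft m u j)) *
              Complex.exp (-((2:ℂ) * Real.pi * Complex.I * (i:ℂ) * (l:ℂ)) / m))) =
            (m:ℂ)⁻¹ * (((b j : ℂ) * csgn (dft m u j)) *
              ∑ l ∈ Finset.range m,
                Complex.exp ((2:ℂ) * Real.pi * Complex.I * (j:ℂ) * (l:ℂ) / m) *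
                  Complex.exp (-((2:ℂ) * Real.pi * Complex.I * (i:ℂ) * (l:ℂ)) / m)) := by
          rw [Finset.mul_sum, Finset.mul_sum]
          exact Finset.sum_congr rfl fun l _ => by ring
        rw [this, ortho m hm hi (Finset.mem_range.mp hj)]
        by_cases h : i = j
        · rw [if_pos h, if_pos h]
          field_simp
        · simp [h]
    _ = (b i : ℂ) * csgn (dft m u i) := by
        rw [Finset.sum_ite_eq, if_pos (Finset.mem_range.mpr hi)]

lemma parseval (m : ℕ) (hm : 1 ≤ m) (w : ℕ → ℂ) :
    ∑ i ∈ Finset.range m, Complex.normSq (dft m w i) =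
      m * ∑ l ∈ Finset.range m, Complex.normSq (w l) := by
  have hconjN : ∀ i l : ℕ,
      (starRingEnd ℂ) (Complex.exp (-((2:ℂ) * Real.pi * Complex.I * (i:ℂ) * (l:ℂ)) / m)) =
        Complex.exp ((2:ℂ) * Real.pi * Complex.I * (i:ℂ) * (l:ℂ) / m) := by
    intro i l
    rw [← Complex.exp_conj]
    congr 1
    simp [map_div₀, map_neg, map_mul, Complex.conj_I, Complex.conj_ofReal, map_natCast, map_ofNat]
  have hC : (∑ i ∈ Finset.range m, (Complex.normSq (dft m w i) : ℂ)) =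
      (m:ℂ) * ∑ l ∈ Finset.range m, (Complex.normSq (w l) : ℂ) := by
    calc ∑ i ∈ Finset.range m, (Complex.normSq (dft m w i) : ℂ)
        = ∑ i ∈ Finset.range m, dft m w i * (starRingEnd ℂ) (dft m w i) := by
          simp [Complex.mul_conj]
      _ = ∑ i ∈ Finset.range m, ∑ l ∈ Finset.range m, ∑ l' ∈ Finset.range m,
            (w l * (starRingEnd ℂ) (w l')) *
              (Complex.exp ((2:ℂ) * Real.pi * Complex.I * (l':ℂ) * (i:ℂ) / m) *
                Complex.exp (-((2:ℂ) * Real.pi * Complex.I * (l:ℂ) * (i:ℂ)) / m)) := by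
          refine Finset.sum_congr rfl fun i _ => ?_
          rw [dft, map_sum, Finset.sum_mul_sum]
          refine Finset.sum_congr rfl fun l _ => ?_
          refine Finset.sum_congr rfl fun l' _ => ?_
          rw [map_mul, hconjN]
          rw [show Complex.exp ((2:ℂ) * Real.pi * Complex.I * (i:ℂ) * (l':ℂ) / m) =
              Complex.exp ((2:ℂ) * Real.pi * Complex.I * (l':ℂ) * (i:ℂ) / m) by congr 1; ring]
          rw [show Complex.exp (-((2:ℂ) * Real.pi * Complex.I * (i:ℂ) * (l:ℂ)) / m) =
              Complex.exp (-((2:ℂ) * Real.pi * Complex.I * (l:ℂ) * (i:ℂ)) / m) by congr 1; ring]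
          ring
      _ = ∑ l ∈ Finset.range m, ∑ l' ∈ Finset.range m,
            (w l * (starRingEnd ℂ) (w l')) *
              ∑ i ∈ Finset.range m,
                (Complex.exp ((2:ℂ) * Real.pi * Complex.I * (l':ℂ) * (i:ℂ) / m) *
                  Complex.exp (-((2:ℂ) * Real.pi * Complex.I * (l:ℂ) * (i:ℂ)) / m)) := by
          rw [Finset.sum_comm]
          refine Finset.sum_congr rfl fun l _ => ?_
          rw [Finset.sum_comm]
          refine Finset.sum_congr rfl fun l' _ => ?_
          rw [Finset.mul_sum]
      _ = ∑ l ∈ Finset.range m, ∑ l' ∈ Finset.range m,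
            (w l * (starRingEnd ℂ) (w l')) * (if l = l' then (m:ℂ) else 0) := by
          refine Finset.sum_congr rfl fun l hl => ?_
          refine Finset.sum_congr rfl fun l' hl' => ?_
          rw [ortho m hm (Finset.mem_range.mp hl) (Finset.mem_range.mp hl')]
      _ = ∑ l ∈ Finset.range m, (w l * (starRingEnd ℂ) (w l)) * m := by
          refine Finset.sum_congr rfl fun l hl => ?_
          rw [Finset.sum_eq_single l]
          · simp
          · intro l' _ hne
            simp [Ne.symm hne]
          · intro h; exact absurd hl h
      _ = (m:ℂ) * ∑ l ∈ Finset.range m, (Complex.normSq (w l) : ℂ) := by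
          rw [Finset.mul_sum]
          refine Finset.sum_congr rfl fun l _ => ?_
          rw [Complex.mul_conj]
          ring
  exact_mod_cast hC

lemma abs_csgn (z : ℂ) : ‖csgn z‖ = 1 := by
  rw [csgn]
  by_cases h : z = 0
  · simp [h]
  · rw [if_neg h]
    rw [norm_div]
    simp [h]

lemma normSq_sub_csgn (z : ℂ) (c : ℝ) :
    Complex.normSq (z - (c:ℂ) * csgn z) = (‖z‖ - c) ^ 2 := by
  by_cases h : z = 0
  · simp [h, csgn, Complex.normSq_apply]
    ring
  · have habs : (‖z‖ : ℝ) ≠ 0 := norm_ne_zero_iff.mpr h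
    have habs' : ((‖z‖ : ℝ) : ℂ) ≠ 0 := by exact_mod_cast habs
    have key : z - (c:ℂ) * csgn z = (((‖z‖ - c : ℝ) : ℂ) / (‖z‖ : ℂ)) * z := by
      rw [csgn, if_neg h]
      push_cast
      field_simp
    rw [key, ← Complex.sq_norm, norm_mul, norm_div, Complex.norm_real, Complex.norm_real, Real.norm_eq_abs, Real.norm_eq_abs]
    rw [abs_of_nonneg (norm_nonneg z)]
    rw [div_mul_cancel₀ _ habs]
    exact sq_abs _

/-- Backtracking accepts the unit step size: `f(ũ) = 0`, and for every `0 < β ≤ 1/2` the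
Armijo criterion with step size `λ = 1` and descent direction `g = u - ũ` holds:
`f(u - g) ≤ f(u) - β ‖g‖²`. -/
theorem stmt12 (m : ℕ) (hm : 1 ≤ m) (b : ℕ → ℝ) (hb : ∀ i, 0 ≤ b i) (u : ℕ → ℂ)
    (β : ℝ) (hβ0 : 0 < β) (hβ : β ≤ 1 / 2) :
    floss m b (utilde m b u) = 0 ∧
      floss m b (fun l => u l - (u l - utilde m b u l)) ≤
        floss m b u - β * ∑ l ∈ Finset.range m, ‖u l - utilde m b u l‖ ^ 2 := by
  have hm0 : (0:ℝ) < m := by exact_mod_cast hm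
  -- f(ũ) = 0
  have h1 : floss m b (utilde m b u) = 0 := by
    rw [floss]
    rw [Finset.sum_eq_zero, mul_zero]
    intro i hi
    rw [dft_utilde m hm b u (Finset.mem_range.mp hi)]
    rw [norm_mul, abs_csgn, Complex.norm_real, Real.norm_eq_abs, abs_of_nonneg (hb i)]
    ring
  refine ⟨h1, ?_⟩
  -- the argument `u - (u - ũ)` is just `ũ`
  have hfun : (fun l => u l - (u l - utilde m b u l)) = utilde m b u := by
    funext l; ring
  rw [hfun, h1]
  -- ‖g‖² = 2 f(u)
  have hlin : ∀ i ∈ Finset.range m,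
      dft m (fun l => u l - utilde m b u l) i = dft m u i - (b i : ℂ) * csgn (dft m u i) := by
    intro i hi
    rw [← dft_utilde m hm b u (Finset.mem_range.mp hi)]
    simp only [dft]
    rw [← Finset.sum_sub_distrib]
    exact Finset.sum_congr rfl fun l _ => by ring
  have hg : ∑ l ∈ Finset.range m, ‖u l - utilde m b u l‖ ^ 2 =
      2 * floss m b u := by
    have hP := parseval m hm (fun l => u l - utilde m b u l)
    have hsum : ∑ i ∈ Finset.range m, Complex.normSq (dft m (fun l => u l - utilde m b u l) i) =
        ∑ i ∈ Finset.range m, (‖dft m u i‖ - b i) ^ 2 := by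
      refine Finset.sum_congr rfl fun i hi => ?_
      rw [hlin i hi, normSq_sub_csgn]
    rw [hsum] at hP
    have habs2 : ∑ l ∈ Finset.range m, ‖u l - utilde m b u l‖ ^ 2 =
        ∑ l ∈ Finset.range m, Complex.normSq (u l - utilde m b u l) := by
      exact Finset.sum_congr rfl fun l _ => Complex.sq_norm _
    rw [habs2, floss]
    have hm0' : (m:ℝ) ≠ 0 := hm0.ne'
    field_simp
    linarith [hP]
  rw [hg]
  have hf0 : 0 ≤ floss m b u := by
    rw [floss]
    apply mul_nonneg
    · positivity
    · exact Finset.sum_nonneg fun i _ => sq_nonneg _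
  nlinarith
end

section
/- (Stationary points attain zero loss.) Let m ≥ 1, let b ∈ ℝ^m have nonnegative entries, and let u ∈ ℂ^m satisfy the stationarity (fixed-point) condition u = ũ, where ũ is the phase-matched synthesis of u with magnitudes b. Then |(F u)_i| = b_i for every i = 0,…,m−1; consequently f(u) = 0, so u is a global minimizer of the nonnegative loss f. -/
lemma csgn_abs (w : ℂ) : ‖csgn w‖ = 1 := by
  unfold csgn
  by_cases h : w = 0
  · simp [h]
  · simp [h, norm_div, div_self]

lemma orth_sum (m : ℕ) (hm : 1 ≤ m) {i j : ℕ} (hi : i < m) (hj : j < m) :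
    ∑ l ∈ Finset.range m,
      Complex.exp ((2 : ℂ) * (Real.pi : ℂ) * Complex.I * (j : ℂ) * (l : ℂ) / (m : ℂ)) *
        Complex.exp (-((2 : ℂ) * (Real.pi : ℂ) * Complex.I * (i : ℂ) * (l : ℂ)) / (m : ℂ)) =
      if j = i then (m : ℂ) else 0 := by
  have hm0 : (m : ℂ) ≠ 0 := Nat.cast_ne_zero.mpr (by omega)
  set c : ℂ := 2 * (Real.pi : ℂ) * Complex.I * ((j : ℂ) - (i : ℂ)) / m with hc
  have hterm : ∀ l ∈ Finset.range m,
      Complex.exp ((2 : ℂ) * (Real.pi : ℂ) * Complex.I * (j : ℂ) * (l : ℂ) / (m : ℂ)) *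
        Complex.exp (-((2 : ℂ) * (Real.pi : ℂ) * Complex.I * (i : ℂ) * (l : ℂ)) / (m : ℂ)) =
      Complex.exp c ^ l := by
    intro l _
    rw [← Complex.exp_nat_mul, ← Complex.exp_add]
    congr 1
    rw [hc]
    field_simp
    ring
  rw [Finset.sum_congr rfl hterm]
  by_cases h : j = i
  · have hc0 : c = 0 := by rw [hc, h]; simp
    simp [hc0, h]
  · have hne : Complex.exp c ≠ 1 := by
      intro hone
      obtain ⟨n, hn⟩ := Complex.exp_eq_one_iff.mp hone
      rw [hc] at hn
      have hpi : (Real.pi : ℂ) ≠ 0 := by exact_mod_cast Real.pi_ne_zero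
      have h2 : ((j : ℂ) - (i : ℂ)) = n * m := by
        have h2pii : (2 : ℂ) * (Real.pi : ℂ) * Complex.I ≠ 0 := by
          simp [Complex.I_ne_zero, hpi]
        refine mul_left_cancel₀ h2pii ?_
        field_simp at hn
        linear_combination (2 * (Real.pi : ℂ) * Complex.I) * hn
      have h3 : (j : ℤ) - (i : ℤ) = n * m := by exact_mod_cast h2
      have hj' : (j : ℤ) < m := by exact_mod_cast hj
      have hi' : (i : ℤ) < m := by exact_mod_cast hi
      have hji : (j : ℤ) ≠ i := by exact_mod_cast h
      have hm' : (0 : ℤ) < m := by exact_mod_cast Nat.pos_of_ne_zero (by omega)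
      rcases lt_trichotomy n 0 with hn0 | hn0 | hn0
      · have hnm : n * (m : ℤ) ≤ -m := by nlinarith
        have := Int.natCast_nonneg j
        linarith
      · rw [hn0, zero_mul] at h3
        omega
      · have hnm : (m : ℤ) ≤ n * m := by nlinarith
        have := Int.natCast_nonneg i
        linarith
    rw [geom_sum_eq hne]
    have hx : Complex.exp c ^ m = 1 := by
      rw [← Complex.exp_nat_mul]
      have heq : (m : ℂ) * c = ((((j : ℤ) - (i : ℤ)) : ℤ) : ℂ) * (2 * (Real.pi : ℂ) * Complex.I) := by
        push_cast
        rw [hc]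
        field_simp
      rw [heq]
      exact Complex.exp_int_mul_two_pi_mul_I _
    simp [hx, h]

/-- Stationary points attain zero loss: if `u = ũ` (the fixed-point condition
`∂f(u) = u - ũ = 0`), then `|(F u)_i| = b_i` for all `i < m`, hence `f(u) = 0` and `u` is
a global minimizer of the nonnegative loss `f`. -/
theorem stmt13 (m : ℕ) (hm : 1 ≤ m) (b : ℕ → ℝ) (hb : ∀ i, 0 ≤ b i) (u : ℕ → ℂ)
    (hstat : ∀ l < m, u l = utilde m b u l) :
    (∀ i < m, ‖dft m u i‖ = b i) ∧
      floss m b u = 0 ∧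
      ∀ v : ℕ → ℂ, floss m b u ≤ floss m b v := by
  have hm0 : (m : ℂ) ≠ 0 := Nat.cast_ne_zero.mpr (by omega)
  have key : ∀ i < m, dft m u i = (b i : ℂ) * csgn (dft m u i) := by
    intro i hi
    have h1 : dft m u i =
        ∑ l ∈ Finset.range m, utilde m b u l *
          Complex.exp (-((2 : ℂ) * (Real.pi : ℂ) * Complex.I * (i : ℂ) * (l : ℂ)) / (m : ℂ)) := by
      unfold dft
      exact Finset.sum_congr rfl fun l hl => by
        rw [← hstat l (Finset.mem_range.mp hl)]
    have h2 : ∀ l ∈ Finset.range m,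
        (((m : ℂ))⁻¹ * ∑ j ∈ Finset.range m,
          Complex.exp ((2 : ℂ) * (Real.pi : ℂ) * Complex.I * (j : ℂ) * (l : ℂ) / (m : ℂ)) *
            (b j : ℂ) * csgn (dft m u j)) *
          Complex.exp (-((2 : ℂ) * (Real.pi : ℂ) * Complex.I * (i : ℂ) * (l : ℂ)) / (m : ℂ)) =
        ∑ j ∈ Finset.range m, ((m : ℂ))⁻¹ * ((b j : ℂ) * csgn (dft m u j)) *
          (Complex.exp ((2 : ℂ) * (Real.pi : ℂ) * Complex.I * (j : ℂ) * (l : ℂ) / (m : ℂ)) *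
            Complex.exp (-((2 : ℂ) * (Real.pi : ℂ) * Complex.I * (i : ℂ) * (l : ℂ)) / (m : ℂ))) := by
      intro l _
      simp only [Finset.mul_sum, Finset.sum_mul]
      exact Finset.sum_congr rfl fun j _ => by ring
    have h3 : ∀ j ∈ Finset.range m,
        (∑ l ∈ Finset.range m, ((m : ℂ))⁻¹ * ((b j : ℂ) * csgn (dft m u j)) *
          (Complex.exp ((2 : ℂ) * (Real.pi : ℂ) * Complex.I * (j : ℂ) * (l : ℂ) / (m : ℂ)) *
            Complex.exp (-((2 : ℂ) * (Real.pi : ℂ) * Complex.I * (i : ℂ) * (l : ℂ)) / (m : ℂ)))) =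
        if j = i then (b j : ℂ) * csgn (dft m u j) else 0 := by
      intro j hj
      rw [← Finset.mul_sum, orth_sum m hm hi (Finset.mem_range.mp hj)]
      by_cases h : j = i
      · rw [if_pos h, if_pos h, mul_right_comm, inv_mul_cancel₀ hm0, one_mul]
      · rw [if_neg h, if_neg h, mul_zero]
    refine h1.trans ?_
    unfold utilde
    rw [Finset.sum_congr rfl h2, Finset.sum_comm, Finset.sum_congr rfl h3,
      Finset.sum_ite_eq' (Finset.range m) i (fun j => (b j : ℂ) * csgn (dft m u j))]
    simp [Finset.mem_range.mpr hi]
  have habs : ∀ i < m, ‖dft m u i‖ = b i := by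
    intro i hi
    rw [key i hi, norm_mul, csgn_abs, Complex.norm_real, Real.norm_eq_abs, abs_of_nonneg (hb i), mul_one]
  have h0 : floss m b u = 0 := by
    unfold floss
    rw [Finset.sum_eq_zero fun i hi => by
      rw [habs i (Finset.mem_range.mp hi)]; ring, mul_zero]
  refine ⟨habs, h0, ?_⟩
  intro v
  rw [h0]
  unfold floss
  have h1 : (0 : ℝ) ≤ ∑ i ∈ Finset.range m, (‖dft m v i‖ - b i) ^ 2 :=
    Finset.sum_nonneg fun i _ => sq_nonneg _
  have h2 : (0 : ℝ) ≤ (1 / (2 * m) : ℝ) := by positivity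
  exact mul_nonneg h2 h1
end
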